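/- Let K_1, K_2 be entrywise nonnegative n×n matrices and α ∈ [0,1]. Then the Hadamard weighted geometric mean K_1^{(α)} ∘ K_2^{(1-α)} (with entries (K_1)_{ij}^α (K_2)_{ij}^{1-α}) satisfies ‖K_1^{(α)} ∘ K_2^{(1-α)}‖ ≤ ‖K_1‖^α ‖K_2‖^{1-α}, where ‖·‖ is the operator norm on ℝ^n with the Euclidean norm. -/

import Mathlib

/-- The ℓ² → ℓ² operator norm of a real `n × n` matrix. -/
noncomputable def opNorm {n : ℕ} (A : Matrix (Fin n) (Fin n) ℝ) : ℝ :=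
  ‖LinearMap.toContinuousLinearMap (Matrix.toEuclideanLin A)‖

lemma opNorm_nonneg {n : ℕ} (A : Matrix (Fin n) (Fin n) ℝ) : 0 ≤ opNorm A := norm_nonneg _

lemma opNorm_mono {n : ℕ} {A B : Matrix (Fin n) (Fin n) ℝ}
    (hA : ∀ i j, 0 ≤ A i j) (hAB : ∀ i j, A i j ≤ B i j) : opNorm A ≤ opNorm B := by
  unfold opNorm
  apply ContinuousLinearMap.opNorm_le_bound _ (norm_nonneg _)
  intro x
  set y : EuclideanSpace ℝ (Fin n) := (WithLp.equiv 2 _).symm (fun j => |x j|) with hy_def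
  have hy : ‖y‖ = ‖x‖ := by
    simp [EuclideanSpace.norm_eq, hy_def, sq_abs]
  have h1 : ‖(LinearMap.toContinuousLinearMap (Matrix.toEuclideanLin A)) x‖ ≤
      ‖(LinearMap.toContinuousLinearMap (Matrix.toEuclideanLin B)) y‖ := by
    simp only [LinearMap.coe_toContinuousLinearMap', Matrix.toEuclideanLin_apply]
    rw [EuclideanSpace.norm_eq, EuclideanSpace.norm_eq]
    apply Real.sqrt_le_sqrt
    apply Finset.sum_le_sum
    intro i _
    simp only [← WithLp.equiv_apply, Matrix.mulVec, dotProduct, Real.norm_eq_abs,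
      sq_abs]
    have hb : 0 ≤ ∑ j, B i j * |(WithLp.equiv 2 _) y j| := by
      apply Finset.sum_nonneg; intro j _
      exact mul_nonneg ((hA i j).trans (hAB i j)) (abs_nonneg _)
    have key : |∑ j, A i j * (WithLp.equiv 2 _) x j| ≤ ∑ j, B i j * |(WithLp.equiv 2 _) x j| := by
      calc |∑ j, A i j * (WithLp.equiv 2 _) x j| ≤ ∑ j, |A i j * (WithLp.equiv 2 _) x j| :=
            Finset.abs_sum_le_sum_abs _ _
        _ ≤ ∑ j, B i j * |(WithLp.equiv 2 _) x j| := by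
            apply Finset.sum_le_sum; intro j _
            rw [abs_mul, abs_of_nonneg (hA i j)]
            exact mul_le_mul_of_nonneg_right (hAB i j) (abs_nonneg _)
    have : ∑ j, B i j * (WithLp.equiv 2 _) y j = ∑ j, B i j * |(WithLp.equiv 2 _) x j| := by
      apply Finset.sum_congr rfl; intro j _; simp [hy_def]
    rw [this]
    calc (∑ j, A i j * (WithLp.equiv 2 _) x j) ^ 2
        = |∑ j, A i j * (WithLp.equiv 2 _) x j| ^ 2 := (sq_abs _).symm
      _ ≤ (∑ j, B i j * |(WithLp.equiv 2 _) x j|) ^ 2 := by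
          apply pow_le_pow_left₀ (abs_nonneg _) key
  calc ‖(LinearMap.toContinuousLinearMap (Matrix.toEuclideanLin A)) x‖
      ≤ ‖(LinearMap.toContinuousLinearMap (Matrix.toEuclideanLin B)) y‖ := h1
    _ ≤ ‖LinearMap.toContinuousLinearMap (Matrix.toEuclideanLin B)‖ * ‖y‖ :=
        ContinuousLinearMap.le_opNorm _ _
    _ = ‖LinearMap.toContinuousLinearMap (Matrix.toEuclideanLin B)‖ * ‖x‖ := by rw [hy]

lemma opNorm_add_le {n : ℕ} (A B : Matrix (Fin n) (Fin n) ℝ) :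
    opNorm (A + B) ≤ opNorm A + opNorm B := by
  unfold opNorm; rw [map_add, map_add]; exact norm_add_le _ _

lemma opNorm_smul_le {n : ℕ} (c : ℝ) (A : Matrix (Fin n) (Fin n) ℝ) :
    opNorm (c • A) ≤ |c| * opNorm A := by
  unfold opNorm; rw [map_smul, map_smul, ← Real.norm_eq_abs]
  exact ContinuousLinearMap.opNorm_smul_le c _

lemma eq_zero_of_opNorm_eq_zero {n : ℕ} {A : Matrix (Fin n) (Fin n) ℝ}
    (h : opNorm A = 0) : A = 0 := by
  unfold opNorm at h
  rw [norm_eq_zero] at h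
  rw [LinearEquiv.map_eq_zero_iff] at h
  exact (LinearEquiv.map_eq_zero_iff _).mp h

theorem opNorm_hadamard_geom_mean_le {n : ℕ} (K₁ K₂ : Matrix (Fin n) (Fin n) ℝ)
    (hK₁ : ∀ i j, 0 ≤ K₁ i j) (hK₂ : ∀ i j, 0 ≤ K₂ i j) (α : ℝ) (hα0 : 0 ≤ α) (hα1 : α ≤ 1) :
    opNorm (Matrix.of fun i j => K₁ i j ^ α * K₂ i j ^ (1 - α)) ≤
      opNorm K₁ ^ α * opNorm K₂ ^ (1 - α) := by
  rcases eq_or_lt_of_le hα0 with h0 | h0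
  · -- α = 0
    have : (Matrix.of fun i j => K₁ i j ^ α * K₂ i j ^ (1 - α)) = K₂ := by
      ext i j; simp [← h0]
    rw [this, ← h0]
    simp
  rcases eq_or_lt_of_le hα1 with h1 | h1
  · -- α = 1
    have : (Matrix.of fun i j => K₁ i j ^ α * K₂ i j ^ (1 - α)) = K₁ := by
      ext i j; simp [h1]
    rw [this, h1]
    simp
  set a := opNorm K₁ with ha_def
  set b := opNorm K₂ with hb_def
  have ha : 0 ≤ a := opNorm_nonneg _
  have hb : 0 ≤ b := opNorm_nonneg _
  have h1α : 0 < 1 - α := by linarith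
  rcases eq_or_lt_of_le ha with ha0 | ha0
  · -- a = 0 so K₁ = 0
    have hK : K₁ = 0 := eq_zero_of_opNorm_eq_zero ha0.symm
    have : (Matrix.of fun i j => K₁ i j ^ α * K₂ i j ^ (1 - α)) = 0 := by
      ext i j; simp [hK, Real.zero_rpow (ne_of_gt h0)]
    rw [this, ← ha0, Real.zero_rpow (ne_of_gt h0)]
    simp only [zero_mul]
    have : opNorm (0 : Matrix (Fin n) (Fin n) ℝ) = 0 := by
      unfold opNorm; rw [map_zero, map_zero, norm_zero]
    rw [this]
  rcases eq_or_lt_of_le hb with hb0 | hb0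
  · have hK : K₂ = 0 := eq_zero_of_opNorm_eq_zero hb0.symm
    have : (Matrix.of fun i j => K₁ i j ^ α * K₂ i j ^ (1 - α)) = 0 := by
      ext i j; simp [hK, Real.zero_rpow (ne_of_gt h1α)]
    rw [this, ← hb0, Real.zero_rpow (ne_of_gt h1α)]
    simp only [mul_zero]
    have : opNorm (0 : Matrix (Fin n) (Fin n) ℝ) = 0 := by
      unfold opNorm; rw [map_zero, map_zero, norm_zero]
    rw [this]
  -- main case
  set l : ℝ := b / a with hl_def
  have hl : 0 < l := div_pos hb0 ha0
  set c : ℝ := α * l ^ (1 - α) with hc_def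
  set d : ℝ := (1 - α) * l ^ (-α) with hd_def
  have hc : 0 ≤ c := mul_nonneg hα0 (Real.rpow_nonneg hl.le _)
  have hd : 0 ≤ d := mul_nonneg h1α.le (Real.rpow_nonneg hl.le _)
  have key : opNorm (Matrix.of fun i j => K₁ i j ^ α * K₂ i j ^ (1 - α)) ≤
      opNorm (c • K₁ + d • K₂) := by
    apply opNorm_mono
    · intro i j
      exact mul_nonneg (Real.rpow_nonneg (hK₁ i j) _) (Real.rpow_nonneg (hK₂ i j) _)
    · intro i j
      simp only [Matrix.of_apply, Matrix.add_apply, Matrix.smul_apply, smul_eq_mul]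
      have amgm := Real.geom_mean_le_arith_mean2_weighted hα0 h1α.le
        (mul_nonneg (Real.rpow_nonneg hl.le (1-α)) (hK₁ i j))
        (mul_nonneg (Real.rpow_nonneg hl.le (-α)) (hK₂ i j))
        (by ring : α + (1 - α) = 1)
      have lhs_eq : (l ^ (1-α) * K₁ i j) ^ α * (l ^ (-α) * K₂ i j) ^ (1-α)
          = K₁ i j ^ α * K₂ i j ^ (1 - α) := by
        rw [Real.mul_rpow (Real.rpow_nonneg hl.le _) (hK₁ i j),
            Real.mul_rpow (Real.rpow_nonneg hl.le _) (hK₂ i j),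
            ← Real.rpow_mul hl.le, ← Real.rpow_mul hl.le]
        have : l ^ ((1 - α) * α) * K₁ i j ^ α * (l ^ (-α * (1 - α)) * K₂ i j ^ (1 - α))
            = (l ^ ((1 - α) * α) * l ^ (-α * (1 - α))) * (K₁ i j ^ α * K₂ i j ^ (1 - α)) := by
          ring
        rw [this, ← Real.rpow_add hl,
          show (1 - α) * α + -α * (1 - α) = 0 by ring, Real.rpow_zero, one_mul]
      rw [lhs_eq] at amgm
      calc K₁ i j ^ α * K₂ i j ^ (1 - α)
          ≤ α * (l ^ (1-α) * K₁ i j) + (1 - α) * (l ^ (-α) * K₂ i j) := amgm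
        _ = c * K₁ i j + d * K₂ i j := by rw [hc_def, hd_def]; ring
  have step2 : opNorm (c • K₁ + d • K₂) ≤ c * a + d * b := by
    calc opNorm (c • K₁ + d • K₂) ≤ opNorm (c • K₁) + opNorm (d • K₂) := opNorm_add_le _ _
      _ ≤ |c| * a + |d| * b := add_le_add (opNorm_smul_le c K₁) (opNorm_smul_le d K₂)
      _ = c * a + d * b := by rw [abs_of_nonneg hc, abs_of_nonneg hd]
  have haa : a ^ α * a ^ (1 - α) = a := by
    rw [← Real.rpow_add ha0]; norm_num
  have hbb : b ^ α * b ^ (1 - α) = b := by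
    rw [← Real.rpow_add hb0]; norm_num
  have e1 : l ^ (1 - α) * a = a ^ α * b ^ (1 - α) := by
    rw [hl_def, Real.div_rpow hb ha]
    rw [div_mul_eq_mul_div, eq_comm, eq_div_iff (ne_of_gt (Real.rpow_pos_of_pos ha0 _))]
    linear_combination b ^ (1 - α) * haa
  have e2 : l ^ (-α) * b = a ^ α * b ^ (1 - α) := by
    rw [Real.rpow_neg hl.le, hl_def, Real.div_rpow hb ha, inv_div, div_mul_eq_mul_div, eq_comm,
      eq_div_iff (ne_of_gt (Real.rpow_pos_of_pos hb0 α))]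
    linear_combination (a ^ α) * hbb
  calc opNorm (Matrix.of fun i j => K₁ i j ^ α * K₂ i j ^ (1 - α))
      ≤ c * a + d * b := key.trans step2
    _ = α * (l ^ (1-α) * a) + (1 - α) * (l ^ (-α) * b) := by rw [hc_def, hd_def]; ring
    _ = a ^ α * b ^ (1 - α) := by rw [e1, e2]; ring
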